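/- Let d, a₀, k₀ be positive integers with d ∣ a₀k₀, and let c₀ ∈ ℂ∖{0}. Fix a point (b₁,…,b_r) ∈ (ℂ*)^r. The number of μ_d-orbits in X(d;a₀,…,a_r) of points of the form (x₀,b₁,…,b_r) with x₀^{k₀} = c₀ equals k₀ · gcd(d,a₀,a₁,…,a_r) / gcd(d,a₁,…,a_r). -/

import Mathlib

private lemma card_quot_zmod (n e : ℕ) (hn : 0 < n) :
    Nat.card (Quot fun u v : ZMod n => ∃ t : ℤ, v = u + t • (e : ZMod n))
      = Nat.gcd n e := by
  haveI : NeZero n := ⟨hn.ne'⟩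
  set m := Nat.gcd n e with hmdef
  have hm : m ∣ n := Nat.gcd_dvd_left n e
  have hme : m ∣ e := Nat.gcd_dvd_right n e
  haveI : NeZero m := ⟨(Nat.gcd_pos_of_pos_left e hn).ne'⟩
  set f0 : ZMod n →+* ZMod m := ZMod.castHom hm (ZMod m) with hf0def
  have sound : ∀ u v : ZMod n, (∃ t : ℤ, v = u + t • (e : ZMod n)) → f0 u = f0 v := by
    rintro u v ⟨t, rfl⟩
    rw [map_add, map_zsmul, map_natCast,
      (ZMod.natCast_eq_zero_iff e m).mpr hme, smul_zero, add_zero]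
  have inj : ∀ u v : ZMod n, f0 u = f0 v → ∃ t : ℤ, v = u + t • (e : ZMod n) := by
    intro u v h
    have h0 : f0 (v - u) = 0 := by rw [map_sub, h, sub_self]
    have h1 : m ∣ (v - u).val := by
      rw [← ZMod.natCast_rightInverse (v - u), map_natCast] at h0
      exact (ZMod.natCast_eq_zero_iff _ m).mp h0
    obtain ⟨c, hc⟩ := h1
    refine ⟨(c : ℤ) * Nat.gcdB n e, ?_⟩
    have hw : v - u = ((m * c : ℕ) : ZMod n) := by
      rw [← hc, ZMod.natCast_rightInverse]
    have hbz := congrArg (fun z : ℤ => (z : ZMod n)) (Nat.gcd_eq_gcd_ab n e)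
    push_cast at hbz
    rw [ZMod.natCast_self, zero_mul, zero_add] at hbz
    -- hbz : (m : ZMod n) = e * gcdB
    push_cast at hw
    rw [zsmul_eq_mul]
    push_cast
    linear_combination hw + (c : ZMod n) * hbz
  set f : (Quot fun u v : ZMod n => ∃ t : ℤ, v = u + t • (e : ZMod n)) → ZMod m :=
    Quot.lift (fun u => f0 u) sound with hfdef
  have hfbij : Function.Bijective f := by
    constructor
    · intro x y
      induction x using Quot.ind with | _ u => ?_
      induction y using Quot.ind with | _ v => ?_
      intro h
      exact Quot.sound (inj u v h)
    · intro x
      refine ⟨Quot.mk _ ((x.val : ℕ) : ZMod n), ?_⟩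
      show f0 _ = x
      rw [map_natCast, ZMod.natCast_rightInverse]
  rw [Nat.card_congr (Equiv.ofBijective f hfbij), Nat.card_zmod]

/-- Fix `(b₁,…,b_r) ∈ (ℂ*)^r`.  The number of `μ_d`-orbits in `X(d;a₀,…,a_r)`
of points of the form `(x₀,b₁,…,b_r)` with `x₀^{k₀} = c₀` equals
`k₀ · gcd(d,a₀,a₁,…,a_r) / gcd(d,a₁,…,a_r)`. -/
theorem card_solutions_fixed_tail (r d k₀ : ℕ) (hd : 0 < d) (hk : 0 < k₀)
    (a : Fin (r + 1) → ℕ) (ha : ∀ i, 0 < a i) (hdvd : d ∣ a 0 * k₀)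
    (c₀ : ℂ) (hc : c₀ ≠ 0) (b : Fin r → ℂ) (hb : ∀ i, b i ≠ 0) :
    Nat.card (Quot (fun x y : {z : ℂ // z ^ k₀ = c₀} =>
        ∃ ξ : ℂ, ξ ^ d = 1 ∧ (y : ℂ) = ξ ^ a 0 * (x : ℂ) ∧
          ∀ i : Fin r, b i = ξ ^ a i.succ * b i)) *
      Nat.gcd d (Finset.univ.gcd fun i : Fin r => a i.succ)
      = k₀ * Nat.gcd d (Finset.univ.gcd a) := by
  haveI : NeZero k₀ := ⟨hk.ne'⟩
  set A := Finset.univ.gcd (fun i : Fin r => a i.succ) with hAdef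
  set g := Nat.gcd d A with hgdef
  have hg : 0 < g := Nat.gcd_pos_of_pos_left A hd
  haveI : NeZero g := ⟨hg.ne'⟩
  have hgd : g ∣ d := Nat.gcd_dvd_left d A
  have hgA : g ∣ A := Nat.gcd_dvd_right d A
  have hgak : g ∣ a 0 * k₀ := hgd.trans hdvd
  set e := a 0 * k₀ / g with hedef
  have heg : e * g = a 0 * k₀ := Nat.div_mul_cancel hgak
  -- roots of unity
  set ζ : ℂ := Complex.exp (2 * Real.pi * Complex.I / k₀) with hζdef
  set ω : ℂ := Complex.exp (2 * Real.pi * Complex.I / g) with hωdef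
  have hζ : IsPrimitiveRoot ζ k₀ := Complex.isPrimitiveRoot_exp k₀ hk.ne'
  have hω : IsPrimitiveRoot ω g := Complex.isPrimitiveRoot_exp g hg.ne'
  have hζk : ζ ^ k₀ = 1 := hζ.pow_eq_one
  have horder : orderOf ζ = k₀ := hζ.eq_orderOf.symm
  have hppm : ∀ {n m : ℕ}, ζ ^ n = ζ ^ m ↔ n ≡ m [MOD k₀] := by
    intro n m
    constructor
    · intro h
      have h2 : ζ ^ (n % k₀) = ζ ^ (m % k₀) := by
        rw [← horder, pow_mod_orderOf, pow_mod_orderOf, h]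
      exact hζ.pow_inj (Nat.mod_lt _ hk) (Nat.mod_lt _ hk) h2
    · intro h
      rw [← pow_mod_orderOf, horder, h, ← horder, pow_mod_orderOf]
  have hωg : ω ^ g = 1 := hω.pow_eq_one
  have hζ0 : ζ ≠ 0 := hζ.ne_zero hk.ne'
  -- key power identity
  have hωa : ω ^ a 0 = ζ ^ e := by
    rw [hζdef, hωdef, ← Complex.exp_nat_mul, ← Complex.exp_nat_mul]
    congr 1
    have hegC : (e : ℂ) * g = (a 0 : ℂ) * k₀ := by exact_mod_cast congrArg (Nat.cast : ℕ → ℂ) heg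
    have hgC : (g : ℂ) ≠ 0 := Nat.cast_ne_zero.mpr hg.ne'
    have hkC : (k₀ : ℂ) ≠ 0 := Nat.cast_ne_zero.mpr hk.ne'
    field_simp
    linear_combination (-1 : ℂ) * hegC
  have hωd : ω ^ d = 1 := by
    obtain ⟨q, hq⟩ := hgd
    rw [hq, pow_mul, hωg, one_pow]
  have hωtail : ∀ i : Fin r, ω ^ a i.succ = 1 := by
    intro i
    obtain ⟨q, hq⟩ := hgA.trans (Finset.gcd_dvd (Finset.mem_univ i) : A ∣ a i.succ)
    rw [hq, pow_mul, hωg, one_pow]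
  -- the k₀-th root b₀
  set b₀ : ℂ := c₀ ^ ((k₀ : ℂ)⁻¹) with hb₀def
  have hb₀ : b₀ ^ k₀ = c₀ := Complex.cpow_nat_inv_pow c₀ hk.ne'
  have hb₀0 : b₀ ≠ 0 := by
    intro h
    exact hc (by rw [← hb₀, h, zero_pow hk.ne'])
  -- the parametrization of the solution set
  have hφmem : ∀ u : ZMod k₀, (b₀ * ζ ^ u.val) ^ k₀ = c₀ := by
    intro u
    rw [mul_pow, hb₀, ← pow_mul, mul_comm u.val k₀, pow_mul, hζk, one_pow, mul_one]
  set φ : ZMod k₀ → {z : ℂ // z ^ k₀ = c₀} := fun u => ⟨b₀ * ζ ^ u.val, hφmem u⟩ with hφdef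
  have hφbij : Function.Bijective φ := by
    constructor
    · intro u v huv
      have h1 : b₀ * ζ ^ u.val = b₀ * ζ ^ v.val := congrArg Subtype.val huv
      have h2 : ζ ^ u.val = ζ ^ v.val := mul_left_cancel₀ hb₀0 h1
      exact ZMod.val_injective k₀ (hζ.pow_inj (ZMod.val_lt u) (ZMod.val_lt v) h2)
    · rintro ⟨z, hz⟩
      have hz0 : (z / b₀) ^ k₀ = 1 := by rw [div_pow, hz, hb₀, div_self hc]
      obtain ⟨i, hi, hζi⟩ := hζ.eq_pow_of_pow_eq_one hz0
      refine ⟨(i : ZMod k₀), ?_⟩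
      apply Subtype.ext
      show b₀ * ζ ^ (i : ZMod k₀).val = z
      rw [ZMod.val_natCast_of_lt hi, hζi, mul_div_cancel₀ z hb₀0]
  -- the relation correspondence
  have key : ∀ u v : ZMod k₀,
      (∃ t : ℤ, v = u + t • (e : ZMod k₀)) ↔
        (∃ ξ : ℂ, ξ ^ d = 1 ∧ (φ v : ℂ) = ξ ^ a 0 * (φ u : ℂ) ∧
          ∀ i : Fin r, b i = ξ ^ a i.succ * b i) := by
    have hge0 : (g : ℤ) • ((e : ℕ) : ZMod k₀) = 0 := by
      rw [zsmul_eq_mul]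
      push_cast
      rw [mul_comm]
      have : ((e * g : ℕ) : ZMod k₀) = 0 := by
        rw [heg]
        push_cast
        rw [ZMod.natCast_self, mul_zero]
      push_cast at this
      exact this
    intro u v
    constructor
    · rintro ⟨t, hv⟩
      set s : ℕ := (t % (g : ℤ)).toNat with hsdef
      have hsg : (s : ℤ) = t % (g : ℤ) :=
        Int.toNat_of_nonneg (Int.emod_nonneg t (by exact_mod_cast hg.ne'))
      have hts : t • ((e : ℕ) : ZMod k₀) = s • ((e : ℕ) : ZMod k₀) := by
        conv_lhs => rw [← Int.emod_add_mul_ediv t (g : ℤ)]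
        rw [add_smul, mul_comm, mul_smul, hge0, smul_zero, add_zero, ← hsg, natCast_zsmul]
      have hv' : ((v.val : ℕ) : ZMod k₀) = ((e * s + u.val : ℕ) : ZMod k₀) := by
        rw [ZMod.natCast_rightInverse v, hv, hts]
        push_cast
        rw [nsmul_eq_mul]
        push_cast
        rw [ZMod.natCast_rightInverse u]
        ring
      have hmod : v.val ≡ e * s + u.val [MOD k₀] := (ZMod.natCast_eq_natCast_iff _ _ _).mp hv'
      have hζeq : ζ ^ v.val = ζ ^ (e * s + u.val) := hppm.mpr hmod
      refine ⟨ω ^ s, ?_, ?_, ?_⟩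
      · rw [← pow_mul, mul_comm s d, pow_mul, hωd, one_pow]
      · show b₀ * ζ ^ v.val = (ω ^ s) ^ a 0 * (b₀ * ζ ^ u.val)
        rw [← pow_mul, mul_comm s (a 0), pow_mul, hωa, ← pow_mul, hζeq, pow_add]
        ring
      · intro i
        rw [← pow_mul, mul_comm s (a i.succ), pow_mul, hωtail i, one_pow, one_mul]
    · rintro ⟨ξ, hξd, hmain, htail⟩
      have hξ1 : ∀ i : Fin r, ξ ^ a i.succ = 1 := by
        intro i
        have h' : ξ ^ a i.succ * b i = 1 * b i := by rw [one_mul, ← htail i]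
        exact mul_right_cancel₀ (hb i) h'
      have hord : orderOf ξ ∣ g :=
        Nat.dvd_gcd (orderOf_dvd_of_pow_eq_one hξd)
          (Finset.dvd_gcd fun i _ => orderOf_dvd_of_pow_eq_one (hξ1 i))
      have hξg : ξ ^ g = 1 := orderOf_dvd_iff_pow_eq_one.mp hord
      obtain ⟨s, hs, hωs⟩ := hω.eq_pow_of_pow_eq_one hξg
      have hmain' : b₀ * ζ ^ v.val = ζ ^ (e * s) * (b₀ * ζ ^ u.val) := by
        have : (φ v : ℂ) = ξ ^ a 0 * (φ u : ℂ) := hmain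
        rw [hφdef] at this
        simp only at this
        rw [← hωs, ← pow_mul, mul_comm s (a 0), pow_mul, hωa, ← pow_mul] at this
        exact this
      have hζeq : ζ ^ v.val = ζ ^ (e * s + u.val) := by
        rw [pow_add]
        exact mul_left_cancel₀ hb₀0 (by rw [hmain']; ring)
      have hmod : v.val ≡ e * s + u.val [MOD k₀] := hppm.mp hζeq
      have hv' : ((v.val : ℕ) : ZMod k₀) = ((e * s + u.val : ℕ) : ZMod k₀) :=
        (ZMod.natCast_eq_natCast_iff _ _ _).mpr hmod
      rw [ZMod.natCast_rightInverse v] at hv'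
      refine ⟨(s : ℤ), ?_⟩
      rw [hv', zsmul_eq_mul]
      push_cast
      rw [ZMod.natCast_rightInverse u]
      ring
  -- put everything together
  have hcard : Nat.card (Quot (fun x y : {z : ℂ // z ^ k₀ = c₀} =>
      ∃ ξ : ℂ, ξ ^ d = 1 ∧ (y : ℂ) = ξ ^ a 0 * (x : ℂ) ∧
        ∀ i : Fin r, b i = ξ ^ a i.succ * b i)) = Nat.gcd k₀ e := by
    rw [← card_quot_zmod k₀ e hk]
    exact Nat.card_congr (Quot.congr (Equiv.ofBijective φ hφbij) key).symm
  rw [hcard]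
  -- arithmetic
  have hGA : Finset.univ.gcd a = Nat.gcd (a 0) A := by
    apply Nat.dvd_antisymm
    · exact Nat.dvd_gcd (Finset.gcd_dvd (Finset.mem_univ 0))
        (Finset.dvd_gcd fun i _ => Finset.gcd_dvd (Finset.mem_univ i.succ))
    · apply Finset.dvd_gcd
      intro i _
      induction i using Fin.cases with
      | zero => exact Nat.gcd_dvd_left _ _
      | succ j => exact (Nat.gcd_dvd_right _ _).trans (Finset.gcd_dvd (Finset.mem_univ j))
  rw [hGA]
  have hassoc : Nat.gcd d (Nat.gcd (a 0) A) = Nat.gcd g (a 0) := by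
    rw [hgdef, Nat.gcd_comm (a 0) A, ← Nat.gcd_assoc]
  rw [hassoc]
  calc Nat.gcd k₀ e * g = Nat.gcd (k₀ * g) (e * g) := (Nat.gcd_mul_right _ _ _).symm
    _ = Nat.gcd (k₀ * g) (k₀ * a 0) := by rw [heg, mul_comm (a 0) k₀]
    _ = k₀ * Nat.gcd g (a 0) := Nat.gcd_mul_left _ _ _
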